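/- Let $f_l(t) = \sum_{i=0}^l t^i$. For integers $n \geq 2$ and odd $p, q$ with $3 \leq p \leq q$, the polynomial $E(t) = (1+t) f_{2n-1} f_{p-1} f_{q-1} - t\,(f_{2n-2} f_{p-1} f_{q-1} + f_{2n-1} f_{p-2} f_{q-1} + f_{2n-1} f_{p-1} f_{q-2})$ is not equal to any polynomial all of whose coefficients lie in $\{-1, 0, 1\}$. -/

import Mathlib

open Polynomial

noncomputable def f (l : ℕ) : Polynomial ℤ := ∑ i ∈ Finset.range (l + 1), X ^ i

lemma f_coeff (l k : ℕ) : (f l).coeff k = if k ≤ l then 1 else 0 := by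
  simp [f, Polynomial.coeff_X_pow, Finset.sum_ite_eq, Nat.lt_succ_iff]

lemma coeff_mul_congr {a b c d : Polynomial ℤ} {k : ℕ}
    (h1 : ∀ i ≤ k, a.coeff i = b.coeff i) (h2 : ∀ i ≤ k, c.coeff i = d.coeff i) :
    ∀ i ≤ k, (a * c).coeff i = (b * d).coeff i := by
  intro i hi
  rw [coeff_mul, coeff_mul]
  refine Finset.sum_congr rfl ?_
  intro x hx
  rw [Finset.HasAntidiagonal.mem_antidiagonal] at hx
  rw [h1 x.1 (by omega), h2 x.2 (by omega)]

lemma coeff_add_congr {a b c d : Polynomial ℤ} {k : ℕ}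
    (h1 : ∀ i ≤ k, a.coeff i = b.coeff i) (h2 : ∀ i ≤ k, c.coeff i = d.coeff i) :
    ∀ i ≤ k, (a + c).coeff i = (b + d).coeff i := by
  intro i hi
  rw [coeff_add, coeff_add, h1 i hi, h2 i hi]

lemma coeff_refl (a : Polynomial ℤ) : ∀ i ≤ 3, a.coeff i = a.coeff i := fun _ _ => rfl

lemma f_trunc (l : ℕ) : ∀ i ≤ 3, (f l).coeff i = (f (min l 3)).coeff i := by
  intro i hi
  rw [f_coeff, f_coeff]
  split_ifs <;> omega

lemma trunc3 (a b c a' b' c' : ℕ) :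
    ((1 + X) * f a * f b * f c
      - X * (f a' * f b * f c + f a * f b' * f c + f a * f b * f c')).coeff 3
    = ((1 + X) * f (min a 3) * f (min b 3) * f (min c 3)
      - X * (f (min a' 3) * f (min b 3) * f (min c 3)
        + f (min a 3) * f (min b' 3) * f (min c 3)
        + f (min a 3) * f (min b 3) * f (min c' 3))).coeff 3 := by
  rw [coeff_sub, coeff_sub]
  have hP := coeff_mul_congr (coeff_mul_congr (coeff_mul_congr (coeff_refl (1 + X))
    (f_trunc a)) (f_trunc b)) (f_trunc c)
  have hQ := coeff_mul_congr (coeff_refl X)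
    (coeff_add_congr
      (coeff_add_congr
        (coeff_mul_congr (coeff_mul_congr (f_trunc a') (f_trunc b)) (f_trunc c))
        (coeff_mul_congr (coeff_mul_congr (f_trunc a) (f_trunc b')) (f_trunc c)))
      (coeff_mul_congr (coeff_mul_congr (f_trunc a) (f_trunc b)) (f_trunc c')))
  rw [hP 3 le_rfl, hQ 3 le_rfl]

set_option maxHeartbeats 3200000 in
theorem stmt10 (n p q : ℕ) (hn : 2 ≤ n) (hp : Odd p) (hq : Odd q)
    (hp3 : 3 ≤ p) (hpq : p ≤ q) :
    ¬ (∀ k : ℕ, ((1 + X) * f (2 * n - 1) * f (p - 1) * f (q - 1)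
        - X * (f (2 * n - 2) * f (p - 1) * f (q - 1)
          + f (2 * n - 1) * f (p - 2) * f (q - 1)
          + f (2 * n - 1) * f (p - 1) * f (q - 2))).coeff k
        ∈ ({-1, 0, 1} : Set ℤ)) := by
  intro h
  have h3 := h 3
  rw [trunc3] at h3
  obtain ⟨mp, hmp⟩ := hp
  obtain ⟨mq, hmq⟩ := hq
  have key : ((1 + X) * f (min (2 * n - 1) 3) * f (min (p - 1) 3) * f (min (q - 1) 3)
      - X * (f (min (2 * n - 2) 3) * f (min (p - 1) 3) * f (min (q - 1) 3)
        + f (min (2 * n - 1) 3) * f (min (p - 2) 3) * f (min (q - 1) 3)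
        + f (min (2 * n - 1) 3) * f (min (p - 1) 3) * f (min (q - 2) 3))).coeff 3
      = -2 := by
    have ha : min (2 * n - 1) 3 = 3 := by omega
    have ha' : min (2 * n - 2) 3 = 2 ∨ min (2 * n - 2) 3 = 3 := by omega
    have hb : (min (p - 1) 3 = 2 ∧ min (p - 2) 3 = 1)
        ∨ (min (p - 1) 3 = 3 ∧ min (p - 2) 3 = 3) := by omega
    have hc : (min (q - 1) 3 = 2 ∧ min (q - 2) 3 = 1)
        ∨ (min (q - 1) 3 = 3 ∧ min (q - 2) 3 = 3) := by omega
    rcases ha' with ha' | ha' <;> rcases hb with ⟨hb1, hb2⟩ | ⟨hb1, hb2⟩ <;>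
      rcases hc with ⟨hc1, hc2⟩ | ⟨hc1, hc2⟩ <;>
      rw [ha, ha', hb1, hb2, hc1, hc2] <;>
      simp only [f, Finset.sum_range_succ, Finset.sum_range_zero, pow_zero, pow_one, zero_add] <;>
      norm_num [coeff_mul, Finset.Nat.sum_antidiagonal_eq_sum_range_succ_mk,
        Finset.sum_range_succ, coeff_one, coeff_X]
  rw [key] at h3
  simp at h3
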